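/- Let H be a real Hilbert space and let (K_1,K_2) be a nonempty closed bounded convex proximal pair in H. Then for every x∈K_1, δ(x,K_2)² = δ(x,K_1)² + d(K_1,K_2)². -/

import Mathlib

open Filter Topology

variable {X : Type*} [NormedAddCommGroup X] [NormedSpace ℝ X]

/-- The distance between two sets: `d(A,B) = inf {‖x−y‖ : x ∈ A, y ∈ B}`. -/
noncomputable def setD (A B : Set X) : ℝ :=
  sInf {r : ℝ | ∃ x ∈ A, ∃ y ∈ B, r = ‖x - y‖}

/-- The diameter-type quantity `δ(A,B) = sup {‖x−y‖ : x ∈ A, y ∈ B}`. -/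
noncomputable def setDelta (A B : Set X) : ℝ :=
  sSup {r : ℝ | ∃ x ∈ A, ∃ y ∈ B, r = ‖x - y‖}

/-- `d(z,B) = inf {‖z−y‖ : y ∈ B}`. -/
noncomputable def ptD (z : X) (B : Set X) : ℝ :=
  sInf {r : ℝ | ∃ y ∈ B, r = ‖z - y‖}

/-- `δ(z,B) = sup {‖z−y‖ : y ∈ B}`. -/
noncomputable def ptDelta (z : X) (B : Set X) : ℝ :=
  sSup {r : ℝ | ∃ y ∈ B, r = ‖z - y‖}

/-- A pair `(A,B)` is semisharp proximal. -/
def SemisharpProximal (A B : Set X) : Prop :=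
  (∀ x ∈ A, ∀ y ∈ B, ∀ z ∈ B, ‖x - y‖ = setD A B → ‖x - z‖ = setD A B → y = z) ∧
  (∀ y ∈ B, ∀ x ∈ A, ∀ z ∈ A, ‖x - y‖ = setD A B → ‖z - y‖ = setD A B → x = z)

/-- The pair `(A,B)` has property UC. -/
def PropertyUC (A B : Set X) : Prop :=
  ∀ x y z : ℕ → X, (∀ n, x n ∈ A) → (∀ n, y n ∈ A) → (∀ n, z n ∈ B) →
    Tendsto (fun n => ‖x n - z n‖) atTop (𝓝 (setD A B)) →
    Tendsto (fun n => ‖y n - z n‖) atTop (𝓝 (setD A B)) →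
    Tendsto (fun n => ‖x n - y n‖) atTop (𝓝 (0 : ℝ))

/-- Weak convergence of a sequence. -/
def WeakConv (u : ℕ → X) (x : X) : Prop :=
  ∀ f : X →L[ℝ] ℝ, Tendsto (fun n => f (u n)) atTop (𝓝 (f x))

/-- The Kadec-Klee property of a normed space. -/
def KadecKleeProp (X : Type*) [NormedAddCommGroup X] [NormedSpace ℝ X] : Prop :=
  ∀ (u : ℕ → X) (x : X), WeakConv u x →
    Tendsto (fun n => ‖u n‖) atTop (𝓝 ‖x‖) → Tendsto u atTop (𝓝 x)

/-- `A` is weak approximatively compact with respect to `B`. -/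
def WeakApproxCompactWrt (A B : Set X) : Prop :=
  ∀ u : ℕ → X, (∀ n, u n ∈ A) →
    Tendsto (fun n => ptD (u n) B) atTop (𝓝 (setD A B)) →
    ∃ a ∈ A, ∃ φ : ℕ → ℕ, StrictMono φ ∧ WeakConv (u ∘ φ) a

/-- `A₀`, the set of points of `A` that realize the distance `d(A,B)`. -/
def proxA (A B : Set X) : Set X := {x ∈ A | ∃ y ∈ B, ‖x - y‖ = setD A B}

/-- `B₀`, the set of points of `B` that realize the distance `d(A,B)`. -/
def proxB (A B : Set X) : Set X := {y ∈ B | ∃ x ∈ A, ‖x - y‖ = setD A B}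

/-- The pair `(A,B)` is proximal: `A = A₀` and `B = B₀`. -/
def ProximalPair (A B : Set X) : Prop := A = proxA A B ∧ B = proxB A B

/-- `r(H₁,H₂) = inf {δ(x,H₂) : x ∈ H₁}`. -/
noncomputable def rr (H1 H2 : Set X) : ℝ := sInf {t : ℝ | ∃ x ∈ H1, t = ptDelta x H2}

/-- `R(H₁,H₂) = max {r(H₁,H₂), r(H₂,H₁)}`. -/
noncomputable def RR (H1 H2 : Set X) : ℝ := max (rr H1 H2) (rr H2 H1)

/-- `(H₁,H₂) ∈ Υ(A,B)`: nonempty closed bounded convex proximal sub-pairs of `(A,B)` at the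
same distance, with at least one of the two sets containing more than one point. -/
def Upsilon (A B H1 H2 : Set X) : Prop :=
  H1 ⊆ A ∧ H2 ⊆ B ∧ H1.Nonempty ∧ H2.Nonempty ∧ IsClosed H1 ∧ IsClosed H2 ∧
    Bornology.IsBounded H1 ∧ Bornology.IsBounded H2 ∧ Convex ℝ H1 ∧ Convex ℝ H2 ∧
    ProximalPair H1 H2 ∧ (¬ H1.Subsingleton ∨ ¬ H2.Subsingleton) ∧
    setD H1 H2 = setD A B

/-- `N(A,B) = sup {R(H₁,H₂)/δ(H₁,H₂) : (H₁,H₂) ∈ Υ(A,B)}`. -/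
noncomputable def NN (A B : Set X) : ℝ :=
  sSup {t : ℝ | ∃ H1 H2 : Set X, Upsilon A B H1 H2 ∧ t = RR H1 H2 / setDelta H1 H2}

/-- `(C₁,C₂) ∈ Ῡ(A,B)`: as `Υ(A,B)` but without requiring proximality. -/
def UpsilonBar (A B C1 C2 : Set X) : Prop :=
  C1 ⊆ A ∧ C2 ⊆ B ∧ C1.Nonempty ∧ C2.Nonempty ∧ IsClosed C1 ∧ IsClosed C2 ∧
    Bornology.IsBounded C1 ∧ Bornology.IsBounded C2 ∧ Convex ℝ C1 ∧ Convex ℝ C2 ∧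
    (¬ C1.Subsingleton ∨ ¬ C2.Subsingleton) ∧ setD C1 C2 = setD A B

/-- `c₀ = sup {R(C₁,C₂)/δ(C₁,C₂) : (C₁,C₂) ∈ Ῡ(A,B)}`. -/
noncomputable def cZero (A B : Set X) : ℝ :=
  sSup {t : ℝ | ∃ C1 C2 : Set X, UpsilonBar A B C1 C2 ∧ t = RR C1 C2 / setDelta C1 C2}

/-- `T` is a cyclic relatively nonexpansive mapping on `A ∪ B`. -/
def CyclicRelNonexpansive (A B : Set X) (T : X → X) : Prop :=
  Set.MapsTo T A B ∧ Set.MapsTo T B A ∧ ∀ x ∈ A, ∀ y ∈ B, ‖T x - T y‖ ≤ ‖x - y‖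


set_option maxHeartbeats 1000000 in
theorem stmt11 {H : Type*} [NormedAddCommGroup H] [InnerProductSpace ℝ H]
    [CompleteSpace H]
    (K1 K2 : Set H) (h1ne : K1.Nonempty) (h2ne : K2.Nonempty)
    (h1cl : IsClosed K1) (h2cl : IsClosed K2)
    (h1bd : Bornology.IsBounded K1) (h2bd : Bornology.IsBounded K2)
    (h1cv : Convex ℝ K1) (h2cv : Convex ℝ K2) (hprox : ProximalPair K1 K2) :
    ∀ x ∈ K1, ptDelta x K2 ^ 2 = ptDelta x K1 ^ 2 + setD K1 K2 ^ 2 := by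
  set d : ℝ := setD K1 K2 with hd
  -- d is a lower bound for all ‖x - y‖
  have hdle : ∀ x ∈ K1, ∀ y ∈ K2, d ≤ ‖x - y‖ := by
    intro x hx y hy
    apply csInf_le
    · exact ⟨0, fun r hr => by obtain ⟨a, _, b, _, rfl⟩ := hr; positivity⟩
    · exact ⟨x, hx, y, hy, rfl⟩
  have hd0 : 0 ≤ d := by
    apply le_csInf
    · obtain ⟨x, hx⟩ := h1ne; obtain ⟨y, hy⟩ := h2ne
      exact ⟨‖x - y‖, x, hx, y, hy, rfl⟩
    · rintro r ⟨a, _, b, _, rfl⟩; positivity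
  -- uniqueness of the minimizing difference vector
  have huniq : ∀ x ∈ K1, ∀ y ∈ K2, ∀ x' ∈ K1, ∀ y' ∈ K2,
      ‖x - y‖ = d → ‖x' - y'‖ = d → y - x = y' - x' := by
    intro x hx y hy x' hx' y' hy' hxy hxy'
    set a := y - x with ha
    set b := y' - x' with hb
    have hmidK1 : (1/2 : ℝ) • x + (1/2 : ℝ) • x' ∈ K1 :=
      h1cv hx hx' (by norm_num) (by norm_num) (by norm_num)
    have hmidK2 : (1/2 : ℝ) • y + (1/2 : ℝ) • y' ∈ K2 :=
      h2cv hy hy' (by norm_num) (by norm_num) (by norm_num)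
    have hmid : d ≤ ‖((1/2 : ℝ) • x + (1/2 : ℝ) • x') - ((1/2 : ℝ) • y + (1/2 : ℝ) • y')‖ :=
      hdle _ hmidK1 _ hmidK2
    have hmideq : ((1/2 : ℝ) • x + (1/2 : ℝ) • x') - ((1/2 : ℝ) • y + (1/2 : ℝ) • y')
        = -((1/2 : ℝ) • (a + b)) := by
      rw [ha, hb]; module
    rw [hmideq, norm_neg, norm_smul] at hmid
    have hab : 2 * d ≤ ‖a + b‖ := by
      have : ‖(1/2 : ℝ)‖ = 1/2 := by norm_num
      rw [this] at hmid; linarith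
    have hna : ‖a‖ = d := by rw [ha, ← norm_neg]; simpa [neg_sub] using hxy
    have hnb : ‖b‖ = d := by rw [hb, ← norm_neg]; simpa [neg_sub] using hxy'
    have hpar : ‖a + b‖ ^ 2 + ‖a - b‖ ^ 2 = 2 * (‖a‖ ^ 2 + ‖b‖ ^ 2) := by
      have := parallelogram_law_with_norm ℝ a b
      nlinarith [this]
    have habsq : (2 * d) ^ 2 ≤ ‖a + b‖ ^ 2 := by
      have h2d : 0 ≤ 2 * d := by linarith
      nlinarith
    have : ‖a - b‖ ^ 2 ≤ 0 := by nlinarith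
    have : ‖a - b‖ = 0 := by nlinarith [norm_nonneg (a - b), sq_nonneg (‖a - b‖)]
    have hab0 : a - b = 0 := norm_eq_zero.mp this
    have : a = b := sub_eq_zero.mp hab0
    simpa [ha, hb] using this
  intro x hx
  -- the translation vector h
  obtain ⟨x0, hx0⟩ := h1ne
  have hx0' : x0 ∈ proxA K1 K2 := hprox.1 ▸ hx0
  obtain ⟨-, y0, hy0, hxy0⟩ := hx0'
  set h : H := y0 - x0 with hh
  have hnh : ‖h‖ = d := by
    rw [hh, ← norm_neg, neg_sub]; exact hxy0
  -- K1 + h ⊆ K2 and K2 - h ⊆ K1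
  have hK1h : ∀ z ∈ K1, z + h ∈ K2 := by
    intro z hz
    have hz' : z ∈ proxA K1 K2 := hprox.1 ▸ hz
    obtain ⟨-, y, hy, hzy⟩ := hz'
    have hdiff : y - z = h := by rw [hh]; exact huniq z hz y hy x0 hx0 y0 hy0 hzy hxy0
    have : z + h = y := by rw [← hdiff]; abel
    rwa [this]
  have hK2h : ∀ y ∈ K2, y - h ∈ K1 := by
    intro y hy
    have hy' : y ∈ proxB K1 K2 := hprox.2 ▸ hy
    obtain ⟨-, z, hz, hzy⟩ := hy'
    have hdiff : y - z = h := by rw [hh]; exact huniq z hz y hy x0 hx0 y0 hy0 hzy hxy0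
    have : y - h = z := by rw [← hdiff]; abel
    rwa [this]
  -- orthogonality: ⟪h, u⟫ = 0 for u ∈ K1 - K1
  have horth : ∀ z ∈ K1, ∀ w ∈ K1, inner ℝ h (z - w) = (0 : ℝ) := by
    have key : ∀ z ∈ K1, ∀ w ∈ K1, (0 : ℝ) ≤ inner ℝ h (z - w) := by
      intro z hz w hw
      by_contra hneg
      push_neg at hneg
      set u := z - w with hu
      have hu0 : u ≠ 0 := by
        intro h0; rw [h0, inner_zero_right] at hneg; exact lt_irrefl 0 hneg
      have hupos : (0 : ℝ) < ‖u‖ ^ 2 := pow_pos (norm_pos_iff.mpr hu0) 2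
      set ε : ℝ := -inner ℝ h u with hε
      have hεpos : 0 < ε := by simp only [hε]; linarith
      set t : ℝ := min 1 (ε / ‖u‖ ^ 2) with ht
      have ht0 : 0 < t := lt_min one_pos (div_pos hεpos hupos)
      have ht1 : t ≤ 1 := min_le_left _ _
      -- the point (1-t)w + t z ∈ K1
      have hp : (1 - t) • w + t • z ∈ K1 := h1cv hw hz (by linarith) (le_of_lt ht0) (by ring)
      have hq : ((1 - t) • w + t • z) + h ∈ K2 := hK1h _ hp
      have hge : d ≤ ‖(((1 - t) • w + t • z) + h) - w‖ := by
        have hg := hdle w hw _ hq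
        rwa [← norm_neg, neg_sub] at hg
      have heq : (((1 - t) • w + t • z) + h) - w = h + t • u := by rw [hu]; module
      rw [heq] at hge
      have hsq : d ^ 2 ≤ ‖h + t • u‖ ^ 2 := by nlinarith [norm_nonneg (h + t • u)]
      have hexp : ‖h + t • u‖ ^ 2 = ‖h‖ ^ 2 + 2 * t * inner ℝ h u + t ^ 2 * ‖u‖ ^ 2 := by
        rw [norm_add_sq_real, real_inner_smul_right, norm_smul]
        have : ‖t‖ = t := abs_of_pos ht0
        rw [this]; ring
      rw [hexp, hnh] at hsq
      have h1 : 2 * t * ε ≤ t ^ 2 * ‖u‖ ^ 2 := by simp only [hε] at hsq ⊢; nlinarith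
      have h2 : t * ‖u‖ ^ 2 ≤ ε := by
        have ht' : t ≤ ε / ‖u‖ ^ 2 := min_le_right _ _
        have hm := mul_le_mul_of_nonneg_right ht' (le_of_lt hupos)
        rwa [div_mul_cancel₀ _ (ne_of_gt hupos)] at hm
      nlinarith
    intro z hz w hw
    have h1 := key z hz w hw
    have h2 := key w hw z hz
    have : inner ℝ h (w - z) = -(inner ℝ h (z - w) : ℝ) := by
      rw [← inner_neg_right, neg_sub]
    rw [this] at h2
    linarith
  -- key norm identity
  have hnormid : ∀ y ∈ K2, ‖x - y‖ ^ 2 = ‖x - (y - h)‖ ^ 2 + d ^ 2 := by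
    intro y hy
    have hz : y - h ∈ K1 := hK2h y hy
    have heq : x - y = (x - (y - h)) - h := by module
    rw [heq, norm_sub_sq_real, hnh]
    have : inner ℝ (x - (y - h)) h = (0 : ℝ) := by
      rw [real_inner_comm]; exact horth x hx (y - h) hz
    rw [this]; ring
  -- sups
  set S1 := {r : ℝ | ∃ z ∈ K1, r = ‖x - z‖} with hS1
  set S2 := {r : ℝ | ∃ y ∈ K2, r = ‖x - y‖} with hS2
  have hS1ne : S1.Nonempty := ⟨‖x - x‖, x, hx, rfl⟩
  have hS2ne : S2.Nonempty := ⟨‖x - (x + h)‖, x + h, hK1h x hx, rfl⟩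
  obtain ⟨C1, hC1⟩ := h1bd.exists_norm_le
  obtain ⟨C2, hC2⟩ := h2bd.exists_norm_le
  have hS1bdd : BddAbove S1 := ⟨‖x‖ + C1, by
    rintro r ⟨z, hz, rfl⟩
    calc ‖x - z‖ ≤ ‖x‖ + ‖z‖ := norm_sub_le _ _
      _ ≤ ‖x‖ + C1 := by linarith [hC1 z hz]⟩
  have hS2bdd : BddAbove S2 := ⟨‖x‖ + C2, by
    rintro r ⟨y, hy, rfl⟩
    calc ‖x - y‖ ≤ ‖x‖ + ‖y‖ := norm_sub_le _ _
      _ ≤ ‖x‖ + C2 := by linarith [hC2 y hy]⟩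
  have hδ1 : ptDelta x K1 = sSup S1 := rfl
  have hδ2 : ptDelta x K2 = sSup S2 := rfl
  set δ1 := sSup S1 with hsd1
  set δ2 := sSup S2 with hsd2
  have hδ1nn : 0 ≤ δ1 := by
    have : ‖x - x‖ ≤ δ1 := le_csSup hS1bdd ⟨x, hx, rfl⟩
    simpa using this
  have hδ2nn : 0 ≤ δ2 := by
    have : (0:ℝ) ≤ ‖x - (x + h)‖ := norm_nonneg _
    linarith [le_csSup hS2bdd (⟨x + h, hK1h x hx, rfl⟩ : ‖x - (x+h)‖ ∈ S2)]
  rw [hδ1, hδ2]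
  -- δ2² ≤ δ1² + d²
  have hle : δ2 ^ 2 ≤ δ1 ^ 2 + d ^ 2 := by
    have hbound : δ2 ≤ Real.sqrt (δ1 ^ 2 + d ^ 2) := by
      apply csSup_le hS2ne
      rintro r ⟨y, hy, rfl⟩
      have h1 : ‖x - y‖ ^ 2 = ‖x - (y - h)‖ ^ 2 + d ^ 2 := hnormid y hy
      have h2 : ‖x - (y - h)‖ ≤ δ1 := le_csSup hS1bdd ⟨y - h, hK2h y hy, rfl⟩
      have h3 : ‖x - y‖ ^ 2 ≤ δ1 ^ 2 + d ^ 2 := by nlinarith [norm_nonneg (x - (y - h))]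
      calc ‖x - y‖ = Real.sqrt (‖x - y‖ ^ 2) := by rw [Real.sqrt_sq (norm_nonneg _)]
        _ ≤ Real.sqrt (δ1 ^ 2 + d ^ 2) := Real.sqrt_le_sqrt h3
    have := Real.sq_sqrt (by positivity : (0:ℝ) ≤ δ1 ^ 2 + d ^ 2)
    nlinarith [Real.sqrt_nonneg (δ1 ^ 2 + d ^ 2)]
  -- δ1² + d² ≤ δ2²
  have hge : δ1 ^ 2 + d ^ 2 ≤ δ2 ^ 2 := by
    have hd2le : d ^ 2 ≤ δ2 ^ 2 := by
      have h1 : ‖x - (x + h)‖ ^ 2 = ‖x - ((x + h) - h)‖ ^ 2 + d ^ 2 := hnormid (x + h) (hK1h x hx)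
      have h2 : ‖x - (x + h)‖ ≤ δ2 := le_csSup hS2bdd ⟨x + h, hK1h x hx, rfl⟩
      nlinarith [norm_nonneg (x - ((x + h) - h)), norm_nonneg (x - (x + h))]
    have hbound : δ1 ≤ Real.sqrt (δ2 ^ 2 - d ^ 2) := by
      apply csSup_le hS1ne
      rintro r ⟨z, hz, rfl⟩
      have hy : z + h ∈ K2 := hK1h z hz
      have h1 : ‖x - (z + h)‖ ^ 2 = ‖x - ((z + h) - h)‖ ^ 2 + d ^ 2 := hnormid (z + h) hy
      have h2 : ‖x - (z + h)‖ ≤ δ2 := le_csSup hS2bdd ⟨z + h, hy, rfl⟩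
      have h3 : ‖x - z‖ ^ 2 ≤ δ2 ^ 2 - d ^ 2 := by
        have hxz : ‖x - ((z + h) - h)‖ = ‖x - z‖ := by norm_num
        have hq2 : ‖x - (z + h)‖ ^ 2 ≤ δ2 ^ 2 := by
          have := mul_self_le_mul_self (norm_nonneg (x - (z + h))) h2
          nlinarith
        rw [hxz] at h1
        linarith
      calc ‖x - z‖ = Real.sqrt (‖x - z‖ ^ 2) := by rw [Real.sqrt_sq (norm_nonneg _)]
        _ ≤ Real.sqrt (δ2 ^ 2 - d ^ 2) := Real.sqrt_le_sqrt h3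
    have := Real.sq_sqrt (by linarith : (0:ℝ) ≤ δ2 ^ 2 - d ^ 2)
    nlinarith [Real.sqrt_nonneg (δ2 ^ 2 - d ^ 2)]
  linarith
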